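/- For every (a,b) in the parameter set P = {(a,b) ∈ (1,2] × [1,2] : ab ≤ 2}, the point P_{a,b} = ((ab + 2a² − a²b)/(1+a²), (ab − 2a + a²b)/(1+a²)) is a fixed point of the map Ψ_{a,b}, and it lies in the region T₁⁺, i.e. its first coordinate x satisfies 1 ≤ x ≤ 2 and x − y ≤ 2 − b where y is its second coordinate. -/

import Mathlib

/-- The piecewise map Ψ_{a,b} on the triangle T. -/
noncomputable def Psi (a b : ℝ) (p : ℝ × ℝ) : ℝ × ℝ :=
  if p.1 ≤ 1 then
    if p.1 + p.2 ≤ b then (a * p.1, a * p.2) else (a * (b - p.2), a * (b - p.1))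
  else
    if 2 - b ≤ p.1 - p.2 then (a * (2 - p.1), a * p.2)
    else (a * (b - p.2), a * (b - 2 + p.1))

theorem fixed_point_in_T1plus (a b : ℝ) (ha1 : 1 < a) (ha2 : a ≤ 2)
    (hb1 : 1 ≤ b) (hb2 : b ≤ 2) (hab : a * b ≤ 2) :
    Psi a b ((a * b + 2 * a ^ 2 - a ^ 2 * b) / (1 + a ^ 2),
             (a * b - 2 * a + a ^ 2 * b) / (1 + a ^ 2)) =
      ((a * b + 2 * a ^ 2 - a ^ 2 * b) / (1 + a ^ 2),
       (a * b - 2 * a + a ^ 2 * b) / (1 + a ^ 2)) ∧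
    1 ≤ (a * b + 2 * a ^ 2 - a ^ 2 * b) / (1 + a ^ 2) ∧
    (a * b + 2 * a ^ 2 - a ^ 2 * b) / (1 + a ^ 2) ≤ 2 ∧
    (a * b + 2 * a ^ 2 - a ^ 2 * b) / (1 + a ^ 2) -
      (a * b - 2 * a + a ^ 2 * b) / (1 + a ^ 2) ≤ 2 - b := by
  have hd : (0:ℝ) < 1 + a ^ 2 := by positivity
  have hd' : (1:ℝ) + a ^ 2 ≠ 0 := ne_of_gt hd
  have hx1 : 1 < (a * b + 2 * a ^ 2 - a ^ 2 * b) / (1 + a ^ 2) := by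
    rw [lt_div_iff₀ hd]
    nlinarith [mul_pos (sub_pos.mpr ha1) (sub_pos.mpr (lt_of_le_of_lt hab (by linarith : (2:ℝ) < a + 1)))]
  have hx2 : (a * b + 2 * a ^ 2 - a ^ 2 * b) / (1 + a ^ 2) ≤ 2 := by
    rw [div_le_iff₀ hd]
    nlinarith [mul_nonneg (le_of_lt (lt_trans one_pos ha1)) (le_of_lt (sub_pos.mpr ha1))]
  have hcond : (a * b + 2 * a ^ 2 - a ^ 2 * b) / (1 + a ^ 2) -
      (a * b - 2 * a + a ^ 2 * b) / (1 + a ^ 2) < 2 - b := by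
    rw [div_sub_div_same, div_lt_iff₀ hd]
    nlinarith [mul_pos (sub_pos.mpr ha1) (sub_pos.mpr (by nlinarith : (2:ℝ) < b * (a + 1)))]
  refine ⟨?_, le_of_lt hx1, hx2, le_of_lt hcond⟩
  simp only [Psi, not_le.mpr hx1, if_neg (not_le.mpr hx1), if_neg (not_le.mpr hcond), if_false]
  refine Prod.ext ?_ ?_ <;> simp only [] <;> field_simp <;> ring
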